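/- With g_i = i+1 for all i ≥ 1, the alternating weighted Ward sum ∑_k (-1)^{n+k} · k! · C(n+k, k) · S(n,k) equals (n+1)^n for all n ≥ 1, where S(n,k) is the Stirling number of the second kind and C denotes binomial coefficients. -/
import Mathlib


def stirling2 : ℕ → ℕ → ℕ
  | 0, 0 => 1
  | 0, _ + 1 => 0
  | _ + 1, 0 => 0
  | n + 1, k + 1 => (k + 1) * stirling2 n (k + 1) + stirling2 n k

lemma stirling2_eq_zero : ∀ n k : ℕ, n < k → stirling2 n k = 0
  | 0, _ + 1, _ => rfl
  | n + 1, k + 1, h => by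
    have h1 : n < k + 1 := by omega
    have h2 : n < k := by omega
    simp [stirling2, stirling2_eq_zero n (k+1) h1, stirling2_eq_zero n k h2]

def ff (x : ℤ) (k : ℕ) : ℤ := ∏ i ∈ Finset.range k, (x - i)

lemma ff_succ (x : ℤ) (k : ℕ) : ff x (k + 1) = ff x k * (x - k) := by
  simp [ff, Finset.prod_range_succ]

lemma stirling_sum (n : ℕ) (x : ℤ) :
    ∑ k ∈ Finset.range (n + 1), (stirling2 n k : ℤ) * ff x k = x ^ n := by
  induction n with
  | zero => simp [stirling2, ff]
  | succ n ih =>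
    have key : ∀ k : ℕ, x * ff x k = ff x (k+1) + k * ff x k := by
      intro k; rw [ff_succ]; ring
    have shift : ∑ k ∈ Finset.range (n + 1), ((k:ℤ)+1) * (stirling2 n (k+1) : ℤ) * ff x (k+1)
        = ∑ k ∈ Finset.range (n + 1), (k : ℤ) * (stirling2 n k : ℤ) * ff x k := by
      rw [Finset.sum_range_succ' (fun k => (k : ℤ) * (stirling2 n k : ℤ) * ff x k) n,
        Finset.sum_range_succ]
      simp [stirling2_eq_zero n (n+1) (by omega)]
    calc ∑ k ∈ Finset.range (n + 2), (stirling2 (n+1) k : ℤ) * ff x k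
        = ∑ k ∈ Finset.range (n + 1), (stirling2 (n+1) (k+1) : ℤ) * ff x (k+1) := by
          rw [Finset.sum_range_succ' (fun k => (stirling2 (n+1) k : ℤ) * ff x k) (n+1)]
          simp [stirling2]
      _ = ∑ k ∈ Finset.range (n + 1),
            (((k:ℤ)+1) * (stirling2 n (k+1) : ℤ) * ff x (k+1) + (stirling2 n k : ℤ) * ff x (k+1)) := by
          apply Finset.sum_congr rfl
          intro k _
          show ((stirling2 (n+1) (k+1) : ℤ)) * ff x (k+1) = _
          simp only [stirling2]
          push_cast
          ring
      _ = ∑ k ∈ Finset.range (n + 1), ((k:ℤ) * (stirling2 n k : ℤ) * ff x k + (stirling2 n k : ℤ) * ff x (k+1)) := by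
          rw [Finset.sum_add_distrib, Finset.sum_add_distrib, shift]
      _ = ∑ k ∈ Finset.range (n + 1), (stirling2 n k : ℤ) * (x * ff x k) := by
          apply Finset.sum_congr rfl
          intro k _
          rw [key k]
          ring
      _ = x * ∑ k ∈ Finset.range (n + 1), (stirling2 n k : ℤ) * ff x k := by
          rw [Finset.mul_sum]; apply Finset.sum_congr rfl; intro k _; ring
      _ = x ^ (n+1) := by rw [ih]; ring

lemma prod_asc (n k : ℕ) :
    (∏ i ∈ Finset.range k, (n + 1 + i)) * n.factorial = (n + k).factorial := by
  induction k with
  | zero => simp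
  | succ k ih =>
    rw [Finset.prod_range_succ, show n + (k+1) = (n+k)+1 from by omega, Nat.factorial_succ, ← ih]
    ring

lemma fact_choose (n k : ℕ) :
    k.factorial * (n+k).choose k * n.factorial = (n + k).factorial := by
  have h := Nat.choose_mul_factorial_mul_factorial (show k ≤ n + k by omega)
  rw [Nat.add_sub_cancel] at h
  rw [← h]
  ring

lemma prod_eq_fact_choose (n k : ℕ) :
    (∏ i ∈ Finset.range k, (n + 1 + i)) = k.factorial * (n+k).choose k := by
  have := (prod_asc n k).trans (fact_choose n k).symm
  exact Nat.eq_of_mul_eq_mul_right n.factorial_pos this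

lemma ff_neg (n k : ℕ) :
    ff (-(n+1 : ℤ)) k = (-1)^k * (k.factorial * (n+k).choose k : ℕ) := by
  have h1 : ff (-(n+1:ℤ)) k = (-1)^k * ∏ i ∈ Finset.range k, ((n:ℤ) + 1 + i) := by
    have hc : ∀ i ∈ Finset.range k, (-(n+1:ℤ) - i) = (-1) * ((n:ℤ)+1+i) := by
      intro i _; ring
    rw [ff, Finset.prod_congr rfl hc, Finset.prod_mul_distrib, Finset.prod_const,
      Finset.card_range]
  rw [h1, ← prod_eq_fact_choose]
  push_cast
  ring

theorem enriched_alternating_sum (n : ℕ) (hn : 1 ≤ n) :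
    ∑ k ∈ Finset.range (n + 1),
      (-1 : ℤ) ^ (n + k) * (Nat.factorial k) * (Nat.choose (n + k) k) * (stirling2 n k) =
      (n + 1) ^ n := by
  have h := stirling_sum n (-(n+1 : ℤ))
  calc ∑ k ∈ Finset.range (n + 1),
      (-1 : ℤ) ^ (n + k) * (Nat.factorial k) * (Nat.choose (n + k) k) * (stirling2 n k)
      = (-1:ℤ)^n * ∑ k ∈ Finset.range (n + 1), (stirling2 n k : ℤ) * ff (-(n+1:ℤ)) k := by
        rw [Finset.mul_sum]
        apply Finset.sum_congr rfl
        intro k _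
        rw [ff_neg]
        push_cast
        rw [pow_add]
        ring
    _ = (-1:ℤ)^n * (-(n+1:ℤ))^n := by rw [h]
    _ = (n + 1) ^ n := by
        rw [← mul_pow]
        norm_num
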